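/- Let A, B, A', B' be finite types. If σ₀ ∈ PPT_2(A:B) and σ₁ ∈ PPT_2(A':B'), then the Kronecker product σ₀ ⊗ σ₁, viewed as a matrix on the bipartite system with first party AA' and second party BB', belongs to PPT_2(AA':BB'). Here the partial transpose on the product system is taken simultaneously over both B and B'. -/

import Mathlib

open Matrix
open scoped ComplexOrder

/-- Total positive semidefinite square root: the PSD square root of `M` if `M` is PSD,
and junk value `0` otherwise. -/
noncomputable def msqrt {n : Type*} [Fintype n] [DecidableEq n]
    (M : Matrix n n ℂ) : Matrix n n ℂ :=
  letI := Classical.dec M.PosSemidef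
  if h : M.PosSemidef then (h.1.eigenvectorUnitary.1 * diagonal ((↑) ∘ Real.sqrt ∘ h.1.eigenvalues) *
    (star h.1.eigenvectorUnitary : Matrix n n ℂ)) else 0

/-- The trace norm `‖M‖₁ = tr √(Mᴴ M)` of a complex matrix, as a real number. -/
noncomputable def traceNorm {n : Type*} [Fintype n] [DecidableEq n]
    (M : Matrix n n ℂ) : ℝ :=
  (msqrt (Mᴴ * M)).trace.re

/-- The partial transpose over the second party `B`:
`M^{T_B}((a,b),(a',b')) = M((a,b'),(a',b))`. -/
def ptB {A B : Type*} (M : Matrix (A × B) (A × B) ℂ) : Matrix (A × B) (A × B) ℂ :=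
  fun x y => M (x.1, y.2) (y.1, x.2)

/-- Uhlmann fidelity `F(ρ,σ) = (tr √(√σ ρ √σ))²` between positive semidefinite matrices. -/
noncomputable def fidelity {n : Type*} [Fintype n] [DecidableEq n]
    (ρ σ : Matrix n n ℂ) : ℝ :=
  ((msqrt (msqrt σ * ρ * msqrt σ)).trace.re) ^ 2

/-- The set `PPT₂(A:B)`: positive semidefinite `σ` such that there exists `ω` with
`−ω ⪯ σ^{T_B} ⪯ ω` and `‖ω^{T_B}‖₁ ≤ 1`. -/
def PPT2set {A B : Type*} [Fintype A] [Fintype B] [DecidableEq A] [DecidableEq B] :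
    Set (Matrix (A × B) (A × B) ℂ) :=
  {σ | σ.PosSemidef ∧ ∃ ω : Matrix (A × B) (A × B) ℂ,
    (ω - ptB σ).PosSemidef ∧ (ω + ptB σ).PosSemidef ∧ traceNorm (ptB ω) ≤ 1}

/-- Partial transpose over the combined second party `BB'` for a matrix on
`(A × B) × (A' × B')`:
`N^{T_{BB'}}(((a,b),(a',b')),((c,d),(c',d'))) = N(((a,d),(a',d')),((c,b),(c',b')))`. -/
def ptBB {A B A' B' : Type*}
    (N : Matrix ((A × B) × (A' × B')) ((A × B) × (A' × B')) ℂ) :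
    Matrix ((A × B) × (A' × B')) ((A × B) × (A' × B')) ℂ :=
  fun x y => N ((x.1.1, y.1.2), (x.2.1, y.2.2)) ((y.1.1, x.1.2), (y.2.1, x.2.2))

/-- The set `PPT₂(AA':BB')` on the bipartite system with first party `A × A'` and second
party `B × B'`, with the partial transpose taken simultaneously over `B` and `B'`. -/
def PPT2setProd {A B A' B' : Type*}
    [Fintype A] [Fintype B] [Fintype A'] [Fintype B']
    [DecidableEq A] [DecidableEq B] [DecidableEq A'] [DecidableEq B'] :
    Set (Matrix ((A × B) × (A' × B')) ((A × B) × (A' × B')) ℂ) :=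
  {σ | σ.PosSemidef ∧ ∃ ω : Matrix ((A × B) × (A' × B')) ((A × B) × (A' × B')) ℂ,
    (ω - ptBB σ).PosSemidef ∧ (ω + ptBB σ).PosSemidef ∧ traceNorm (ptBB ω) ≤ 1}

namespace Matrix.PosSemidef

open scoped MatrixOrder

/-- The PSD square root of a PSD matrix (via the continuous functional calculus). -/
noncomputable def sqrt {n : Type*} [Fintype n] [DecidableEq n] {M : Matrix n n ℂ}
    (_h : M.PosSemidef) : Matrix n n ℂ :=
  CFC.sqrt M

lemma posSemidef_sqrt {n : Type*} [Fintype n] [DecidableEq n] {M : Matrix n n ℂ}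
    (h : M.PosSemidef) : h.sqrt.PosSemidef :=
  Matrix.nonneg_iff_posSemidef.mp (CFC.sqrt_nonneg M)

lemma sqrt_mul_self {n : Type*} [Fintype n] [DecidableEq n] {M : Matrix n n ℂ}
    (h : M.PosSemidef) : h.sqrt * h.sqrt = M :=
  CFC.sqrt_mul_sqrt_self M h.nonneg

lemma eq_sqrt_of_sq_eq {n : Type*} [Fintype n] [DecidableEq n] {A B : Matrix n n ℂ}
    (hA : A.PosSemidef) (hB : B.PosSemidef) (hAB : A ^ 2 = B) : A = hB.sqrt :=
  ((CFC.sqrt_eq_iff B A hB.nonneg hA.nonneg).mpr (by rw [← pow_two, hAB])).symm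

end Matrix.PosSemidef

section Aux

open scoped Kronecker

variable {m n : Type*} [Fintype m] [Fintype n] [DecidableEq m] [DecidableEq n]

lemma kron_conjTranspose (M : Matrix m m ℂ) (N : Matrix n n ℂ) :
    (M ⊗ₖ N)ᴴ = Mᴴ ⊗ₖ Nᴴ := by
  ext ⟨i, j⟩ ⟨k, l⟩
  simp [conjTranspose_apply, kroneckerMap_apply]

lemma kron_posSemidef {P : Matrix m m ℂ} {Q : Matrix n n ℂ}
    (hP : P.PosSemidef) (hQ : Q.PosSemidef) : (P ⊗ₖ Q).PosSemidef := by
  have h : P ⊗ₖ Q = (hP.sqrt ⊗ₖ hQ.sqrt)ᴴ * (hP.sqrt ⊗ₖ hQ.sqrt) := by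
    rw [kron_conjTranspose, hP.posSemidef_sqrt.1, hQ.posSemidef_sqrt.1,
      ← Matrix.mul_kronecker_mul, hP.sqrt_mul_self, hQ.sqrt_mul_self]
  rw [h]
  exact Matrix.posSemidef_conjTranspose_mul_self _

lemma msqrt_eq {M : Matrix m m ℂ} (hM : M.PosSemidef) : msqrt M = hM.sqrt := by
  open scoped MatrixOrder in
  rw [msqrt, dif_pos hM, Matrix.PosSemidef.sqrt, CFC.sqrt_eq_real_sqrt M hM.nonneg,
    cfcₙ_eq_cfc (hf0 := Real.sqrt_zero), hM.1.cfc_eq, Matrix.IsHermitian.cfc, Unitary.conjStarAlgAut_apply]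
  rfl

lemma msqrt_kron {P : Matrix m m ℂ} {Q : Matrix n n ℂ}
    (hP : P.PosSemidef) (hQ : Q.PosSemidef) :
    msqrt (P ⊗ₖ Q) = msqrt P ⊗ₖ msqrt Q := by
  rw [msqrt_eq (kron_posSemidef hP hQ), msqrt_eq hP, msqrt_eq hQ]
  refine ((kron_posSemidef hP.posSemidef_sqrt hQ.posSemidef_sqrt).eq_sqrt_of_sq_eq
    (kron_posSemidef hP hQ) ?_).symm
  rw [pow_two, ← Matrix.mul_kronecker_mul, hP.sqrt_mul_self, hQ.sqrt_mul_self]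

lemma trace_nonneg_c {P : Matrix m m ℂ} (hP : P.PosSemidef) : 0 ≤ P.trace := by
  rw [Matrix.trace]
  refine Finset.sum_nonneg fun i _ => ?_
  exact hP.diag_nonneg

lemma traceNorm_kron (M : Matrix m m ℂ) (N : Matrix n n ℂ) :
    traceNorm (M ⊗ₖ N) = traceNorm M * traceNorm N := by
  unfold traceNorm
  rw [kron_conjTranspose, ← Matrix.mul_kronecker_mul,
    msqrt_kron (Matrix.posSemidef_conjTranspose_mul_self M)
      (Matrix.posSemidef_conjTranspose_mul_self N),
    Matrix.trace_kronecker]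
  have h1 := trace_nonneg_c
    (msqrt_eq (Matrix.posSemidef_conjTranspose_mul_self M) ▸
      (Matrix.posSemidef_conjTranspose_mul_self M).posSemidef_sqrt)
  have h2 := trace_nonneg_c
    (msqrt_eq (Matrix.posSemidef_conjTranspose_mul_self N) ▸
      (Matrix.posSemidef_conjTranspose_mul_self N).posSemidef_sqrt)
  rw [Complex.nonneg_iff] at h1 h2
  rw [Complex.mul_re, ← h1.2, ← h2.2]
  ring

lemma traceNorm_nonneg (M : Matrix m m ℂ) : 0 ≤ traceNorm M := by
  unfold traceNorm
  have := trace_nonneg_c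
    (msqrt_eq (Matrix.posSemidef_conjTranspose_mul_self M) ▸
      (Matrix.posSemidef_conjTranspose_mul_self M).posSemidef_sqrt)
  exact (Complex.nonneg_iff.mp this).1

lemma half_smul_psd {M : Matrix m m ℂ} (hM : M.PosSemidef) :
    ((2⁻¹ : ℂ) • M).PosSemidef := by
  constructor
  · rw [Matrix.IsHermitian, Matrix.conjTranspose_smul, hM.1]
    norm_num
  · intro x
    exact (hM.smul (by rw [Complex.nonneg_iff]; norm_num : (0 : ℂ) ≤ 2⁻¹)).2 x

end Aux

open scoped Kronecker in
theorem PPT2_kron {A B A' B' : Type*}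
    [Fintype A] [Fintype B] [Fintype A'] [Fintype B']
    [DecidableEq A] [DecidableEq B] [DecidableEq A'] [DecidableEq B']
    (σ₀ : Matrix (A × B) (A × B) ℂ) (σ₁ : Matrix (A' × B') (A' × B') ℂ)
    (h₀ : σ₀ ∈ PPT2set (A := A) (B := B))
    (h₁ : σ₁ ∈ PPT2set (A := A') (B := B')) :
    σ₀ ⊗ₖ σ₁ ∈ PPT2setProd (A := A) (B := B) (A' := A') (B' := B') := by
  obtain ⟨hσ₀, ω₀, h₀m, h₀p, h₀n⟩ := h₀
  obtain ⟨hσ₁, ω₁, h₁m, h₁p, h₁n⟩ := h₁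
  refine ⟨kron_posSemidef hσ₀ hσ₁, ω₀ ⊗ₖ ω₁, ?_, ?_, ?_⟩
  · have key : ω₀ ⊗ₖ ω₁ - ptBB (σ₀ ⊗ₖ σ₁) =
        (2⁻¹ : ℂ) • ((ω₀ - ptB σ₀) ⊗ₖ (ω₁ + ptB σ₁) + (ω₀ + ptB σ₀) ⊗ₖ (ω₁ - ptB σ₁)) := by
      ext ⟨⟨a, b⟩, ⟨c, d⟩⟩ ⟨⟨e, f⟩, ⟨g, h⟩⟩
      simp only [ptBB, ptB, Matrix.sub_apply, Matrix.add_apply, Matrix.smul_apply,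
        Matrix.kroneckerMap_apply, smul_eq_mul]
      ring
    rw [key]
    exact half_smul_psd ((kron_posSemidef h₀m h₁p).add (kron_posSemidef h₀p h₁m))
  · have key : ω₀ ⊗ₖ ω₁ + ptBB (σ₀ ⊗ₖ σ₁) =
        (2⁻¹ : ℂ) • ((ω₀ - ptB σ₀) ⊗ₖ (ω₁ - ptB σ₁) + (ω₀ + ptB σ₀) ⊗ₖ (ω₁ + ptB σ₁)) := by
      ext ⟨⟨a, b⟩, ⟨c, d⟩⟩ ⟨⟨e, f⟩, ⟨g, h⟩⟩
      simp only [ptBB, ptB, Matrix.sub_apply, Matrix.add_apply, Matrix.smul_apply,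
        Matrix.kroneckerMap_apply, smul_eq_mul]
      ring
    rw [key]
    exact half_smul_psd ((kron_posSemidef h₀m h₁m).add (kron_posSemidef h₀p h₁p))
  · have key : ptBB (ω₀ ⊗ₖ ω₁) = ptB ω₀ ⊗ₖ ptB ω₁ := by
      ext ⟨⟨a, b⟩, ⟨c, d⟩⟩ ⟨⟨e, f⟩, ⟨g, h⟩⟩
      rfl
    rw [key, traceNorm_kron]
    calc traceNorm (ptB ω₀) * traceNorm (ptB ω₁) ≤ 1 * 1 :=
          mul_le_mul h₀n h₁n (traceNorm_nonneg _) (by linarith [traceNorm_nonneg (ptB ω₀)])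
      _ = 1 := by ring
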